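/- Fix b ∈ ℝ, Δt > 0 with bΔt = (2n+1)π for some integer n. Then w(ν) = (ν − bΔt)(cos ν − 1)/sin ν, defined on (2nπ, (2n+1)π), satisfies w(2(2n+1)π − ν) = w(ν) wherever both sides are defined, w(ν) → 0 as ν → 2nπ⁺, w(ν) → 2 as ν → (2n+1)π⁻, and w is strictly increasing on (2nπ, (2n+1)π). -/

import Mathlib

set_option maxHeartbeats 1000000

open Real Set Filter

theorem stmt_16 (b Δt : ℝ) (hΔt : 0 < Δt) (n : ℤ)
    (hbt : b * Δt = (2 * n + 1) * Real.pi)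
    (w : ℝ → ℝ)
    (hw : ∀ ν, w ν = (ν - b * Δt) * (Real.cos ν - 1) / Real.sin ν) :
    (∀ ν ∈ Set.Ioo (2 * n * Real.pi) ((2 * n + 1) * Real.pi),
        w (2 * (2 * n + 1) * Real.pi - ν) = w ν) ∧
    Filter.Tendsto w
      (nhdsWithin (2 * n * Real.pi) (Set.Ioi (2 * n * Real.pi))) (nhds 0) ∧
    Filter.Tendsto w
      (nhdsWithin ((2 * n + 1) * Real.pi) (Set.Iio ((2 * n + 1) * Real.pi))) (nhds 2) ∧
    StrictMonoOn w (Set.Ioo (2 * n * Real.pi) ((2 * n + 1) * Real.pi)) := by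
  have hπ := Real.pi_pos
  simp only [hbt] at hw
  set a : ℝ := 2 * (n : ℝ) * Real.pi with ha
  set c : ℝ := (2 * (n : ℝ) + 1) * Real.pi with hc
  have hac : a < c := by rw [ha, hc]; nlinarith
  -- basic trig values
  have hsinc : Real.sin c = 0 := by
    have : c = ((2 * n + 1 : ℤ) : ℝ) * Real.pi := by push_cast [hc]; ring
    rw [this]; exact Real.sin_int_mul_pi _
  have hcosc : Real.cos c = -1 := by
    have : c = ((n : ℤ) : ℝ) * (2 * Real.pi) + Real.pi := by push_cast [hc]; ring
    rw [this, Real.cos_add_pi, Real.cos_int_mul_two_pi]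
  have hcosnpi : Real.cos ((n : ℝ) * Real.pi) ≠ 0 := by
    have h2 := Real.cos_two_mul ((n : ℝ) * Real.pi)
    have h3 : Real.cos (2 * ((n : ℝ) * Real.pi)) = 1 := by
      have he : (2 * ((n : ℝ) * Real.pi)) = ((n : ℤ) : ℝ) * (2 * Real.pi) := by push_cast; ring
      rw [he]; exact Real.cos_int_mul_two_pi n
    intro h0
    rw [h0] at h2; rw [h3] at h2; norm_num at h2
  -- positivity of sin on the interval
  have hsinpos : ∀ ν ∈ Set.Ioo a c, 0 < Real.sin ν := by
    intro ν hν
    have he : Real.sin ν = Real.sin (ν - a) := by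
      have : ν = (ν - a) + ((n : ℤ) : ℝ) * (2 * Real.pi) := by push_cast [ha]; ring
      nth_rewrite 1 [this]
      rw [Real.sin_add_int_mul_two_pi]
    rw [he]
    apply Real.sin_pos_of_pos_of_lt_pi
    · linarith [hν.1]
    · have := hν.2; rw [hc, ha] at *; linarith [hν.2]
  -- g : the tangent form
  set g : ℝ → ℝ := fun ν => (c - ν) * Real.tan (ν / 2) with hg
  have hcoshalf : ∀ ν ∈ Set.Ioo a c, Real.cos (ν / 2) ≠ 0 ∧ Real.sin (ν / 2) ≠ 0 := by
    intro ν hν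
    have hs := hsinpos ν hν
    have h2 : Real.sin ν = 2 * Real.sin (ν / 2) * Real.cos (ν / 2) := by
      have : ν = 2 * (ν / 2) := by ring
      nth_rewrite 1 [this]; exact Real.sin_two_mul _
    constructor
    · intro h0; rw [h2, h0] at hs; simp at hs
    · intro h0; rw [h2, h0] at hs; simp at hs
  have hwg : ∀ ν ∈ Set.Ioo a c, w ν = g ν := by
    intro ν hν
    obtain ⟨hco, hsn⟩ := hcoshalf ν hν
    have h2 : Real.sin ν = 2 * Real.sin (ν / 2) * Real.cos (ν / 2) := by
      have : ν = 2 * (ν / 2) := by ring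
      nth_rewrite 1 [this]; exact Real.sin_two_mul _
    have h3 : Real.cos ν - 1 = -2 * Real.sin (ν / 2) ^ 2 := by
      have h4 : Real.cos ν = 2 * Real.cos (ν / 2) ^ 2 - 1 := by
        have : ν = 2 * (ν / 2) := by ring
        nth_rewrite 1 [this]; exact Real.cos_two_mul _
      have h5 := Real.sin_sq_add_cos_sq (ν / 2)
      nlinarith
    have hgν : g ν = (c - ν) * Real.tan (ν / 2) := rfl
    rw [hw, h2, h3, hgν, Real.tan_eq_sin_div_cos]
    field_simp
    ring
  refine ⟨?_, ?_, ?_, ?_⟩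
  -- Part 1 : reflection
  · intro ν hν
    have hcos2 : Real.cos (2 * (2 * (n : ℝ) + 1) * Real.pi - ν) = Real.cos ν := by
      have he : 2 * (2 * (n : ℝ) + 1) * Real.pi - ν =
          -ν + ((2 * n + 1 : ℤ) : ℝ) * (2 * Real.pi) := by push_cast; ring
      rw [he, Real.cos_add_int_mul_two_pi, Real.cos_neg]
    have hsin2 : Real.sin (2 * (2 * (n : ℝ) + 1) * Real.pi - ν) = -Real.sin ν := by
      have he : 2 * (2 * (n : ℝ) + 1) * Real.pi - ν =
          -ν + ((2 * n + 1 : ℤ) : ℝ) * (2 * Real.pi) := by push_cast; ring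
      rw [he, Real.sin_add_int_mul_two_pi, Real.sin_neg]
    rw [hw, hw, hcos2, hsin2, div_neg, ← neg_div]
    congr 1
    ring
  -- Part 2 : limit at a from the right
  · have hmem : Set.Ioo a c ∈ nhdsWithin a (Set.Ioi a) :=
      Ioo_mem_nhdsGT_of_mem ⟨le_refl a, hac⟩
    have heq : g =ᶠ[nhdsWithin a (Set.Ioi a)] w :=
      Filter.eventuallyEq_of_mem hmem (fun ν hν => (hwg ν hν).symm)
    have hcosa2 : Real.cos (a / 2) ≠ 0 := by
      have : a / 2 = (n : ℝ) * Real.pi := by rw [ha]; ring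
      rw [this]; exact hcosnpi
    have hcont : ContinuousAt g a := by
      apply ContinuousAt.mul
      · exact (continuous_const.sub continuous_id).continuousAt
      · have hhalf : ContinuousAt (fun ν : ℝ => ν / 2) a :=
          continuousAt_id.div continuousAt_const (by norm_num)
        exact ContinuousAt.comp (g := Real.tan) (Real.continuousAt_tan.mpr hcosa2) hhalf
    have hval : g a = 0 := by
      have h1 : a / 2 = ((n : ℤ) : ℝ) * Real.pi := by rw [ha]; push_cast; ring
      rw [hg]
      simp only
      rw [h1, Real.tan_eq_sin_div_cos, Real.sin_int_mul_pi]
      simp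
    have h5 := (hcont.continuousWithinAt (s := Set.Ioi a)).tendsto
    rw [hval] at h5
    exact h5.congr' heq
  -- Part 3 : limit at c from the left
  · have hslope : Filter.Tendsto (slope Real.sin c) (nhdsWithin c (Set.Iio c)) (nhds (-1)) := by
      have h1 := hasDerivAt_iff_tendsto_slope.mp (Real.hasDerivAt_sin c)
      rw [hcosc] at h1
      exact h1.mono_left (nhdsWithin_mono c (fun x hx => ne_of_lt hx))
    have hnum : Filter.Tendsto (fun ν => Real.cos ν - 1) (nhdsWithin c (Set.Iio c)) (nhds (-2)) := by
      have h1 : ContinuousAt (fun ν => Real.cos ν - 1) c :=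
        (Real.continuous_cos.sub continuous_const).continuousAt
      have h2 := (h1.continuousWithinAt (s := Set.Iio c)).tendsto
      rw [hcosc] at h2
      norm_num at h2
      exact h2
    have hdiv := hnum.div hslope (by norm_num : (-1 : ℝ) ≠ 0)
    norm_num at hdiv
    refine hdiv.congr (fun ν => ?_)
    simp only [Pi.div_apply]
    rw [slope_def_field, hsinc, sub_zero, div_div_eq_mul_div, hw]
    ring
  -- Part 4 : strict monotonicity
  · apply strictMonoOn_of_deriv_pos (convex_Ioo a c)
    · apply ContinuousOn.congr _ hwg
      intro ν hν
      obtain ⟨hco, _⟩ := hcoshalf ν hν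
      apply ContinuousAt.continuousWithinAt
      apply ContinuousAt.mul
      · exact (continuous_const.sub continuous_id).continuousAt
      · have hhalf : ContinuousAt (fun x : ℝ => x / 2) ν :=
          continuousAt_id.div continuousAt_const (by norm_num)
        exact ContinuousAt.comp (g := Real.tan) (Real.continuousAt_tan.mpr hco) hhalf
    · intro ν hν
      rw [interior_Ioo] at hν
      obtain ⟨hco, hsn⟩ := hcoshalf ν hν
      have h1 : HasDerivAt (fun x : ℝ => x / 2) (1 / 2) ν := by
        simpa using (hasDerivAt_id ν).div_const 2
      have h2 : HasDerivAt (fun x : ℝ => Real.tan (x / 2))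
          (1 / Real.cos (ν / 2) ^ 2 * (1 / 2)) ν :=
        by have := (Real.hasDerivAt_tan hco).comp ν h1; exact this
      have h3 : HasDerivAt (fun x : ℝ => c - x) (-1) ν := (hasDerivAt_id ν).const_sub c
      have h4 : HasDerivAt g
          (-1 * Real.tan (ν / 2) + (c - ν) * (1 / Real.cos (ν / 2) ^ 2 * (1 / 2))) ν := by
        simpa [hg] using h3.fun_mul h2
      have hderiv : deriv w ν =
          -1 * Real.tan (ν / 2) + (c - ν) * (1 / Real.cos (ν / 2) ^ 2 * (1 / 2)) := by
        have heq : w =ᶠ[nhds ν] g :=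
          Filter.eventually_of_mem (isOpen_Ioo.mem_nhds hν) hwg
        rw [heq.deriv_eq, h4.deriv]
      rw [hderiv]
      -- key inequality : 2 sin(ν/2) cos(ν/2) = sin ν = sin(c - ν) < c - ν
      have hkey : 2 * Real.sin (ν / 2) * Real.cos (ν / 2) < c - ν := by
        have h5 : Real.sin ν = 2 * Real.sin (ν / 2) * Real.cos (ν / 2) := by
          have : ν = 2 * (ν / 2) := by ring
          nth_rewrite 1 [this]; exact Real.sin_two_mul _
        have h6 : Real.sin (c - ν) = Real.sin ν := by
          have he : c - ν = ((2 * n + 1 : ℤ) : ℝ) * Real.pi - ν := by push_cast [hc]; ring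
          rw [he, Real.sin_int_mul_pi_sub]
          have : ((-1 : ℝ)) ^ (2 * n + 1 : ℤ) = -1 := Odd.neg_one_zpow ⟨n, by ring⟩
          rw [this]; ring
        have h7 : Real.sin (c - ν) < c - ν := Real.sin_lt (by linarith [hν.2])
        rw [h6, h5] at h7
        exact h7
      have hco2 : 0 < Real.cos (ν / 2) ^ 2 :=
        lt_of_le_of_ne (sq_nonneg _) (Ne.symm (pow_ne_zero 2 hco))
      rw [Real.tan_eq_sin_div_cos]
      have heq2 : -1 * (Real.sin (ν / 2) / Real.cos (ν / 2)) +
          (c - ν) * (1 / Real.cos (ν / 2) ^ 2 * (1 / 2)) =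
          ((c - ν) - 2 * Real.sin (ν / 2) * Real.cos (ν / 2)) / (2 * Real.cos (ν / 2) ^ 2) := by
        field_simp
        ring
      rw [heq2]
      exact div_pos (by linarith) (mul_pos (by norm_num) hco2)
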